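/- Let q ∈ (1,2), T_0(x) = qx, T_1(x) = qx - 1, y_j = Π(0 1^j (10)^∞), z_j = Π(1 0^j (01)^∞). Then for all j, k ≥ 1 and m ≥ 0: T_0^m(T_1(y_j)) = z_k if and only if T_1^m(T_0(z_j)) = y_k. -/

import Mathlib

/-- `y q j = Π(0 1^j (10)^∞)`: digit 0, then j ones, then (10) repeated. -/
noncomputable def yExp (q : ℝ) (j : ℕ) : ℝ :=
  ∑' i : ℕ, (if i = 0 then (0:ℝ) else if i ≤ j then 1
    else if (i - (j + 1)) % 2 = 0 then 1 else 0) / q ^ (i + 1)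

/-- `z q j = Π(1 0^j (01)^∞)`: digit 1, then j zeros, then (01) repeated. -/
noncomputable def zExp (q : ℝ) (j : ℕ) : ℝ :=
  ∑' i : ℕ, (if i = 0 then (1:ℝ) else if i ≤ j then 0
    else if (i - (j + 1)) % 2 = 0 then 0 else 1) / q ^ (i + 1)

lemma digit_summable (q : ℝ) (hq : 1 < q) (d : ℕ → ℝ) (h0 : ∀ i, 0 ≤ d i)
    (h1 : ∀ i, d i ≤ 1) : Summable (fun i : ℕ => d i / q ^ (i + 1)) := by
  have hq0 : (0:ℝ) < q := by linarith
  have hg : Summable (fun i : ℕ => q⁻¹ * q⁻¹ ^ i) :=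
    (summable_geometric_of_lt_one (r := q⁻¹) (inv_nonneg.mpr hq0.le) (by
      rw [inv_lt_one_iff₀]; right; exact hq)).mul_left _
  refine Summable.of_nonneg_of_le (fun i => div_nonneg (h0 i) (pow_nonneg hq0.le _)) (fun i => ?_) hg
  rw [div_le_iff₀ (pow_pos hq0 _)]
  calc d i ≤ 1 := h1 i
    _ = q⁻¹ * q⁻¹ ^ i * q ^ (i+1) := by
        rw [pow_succ, inv_pow]; field_simp
  -- done

lemma yz_sum (q : ℝ) (hq : 1 < q) (j : ℕ) : yExp q j + zExp q j = 1 / (q - 1) := by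
  have hq0 : (0:ℝ) < q := by linarith
  set d : ℕ → ℝ := fun i => if i = 0 then (0:ℝ) else if i ≤ j then 1
    else if (i - (j + 1)) % 2 = 0 then 1 else 0 with hd
  set e : ℕ → ℝ := fun i => if i = 0 then (1:ℝ) else if i ≤ j then 0
    else if (i - (j + 1)) % 2 = 0 then 0 else 1 with he
  have hds : Summable (fun i : ℕ => d i / q ^ (i + 1)) := by
    refine digit_summable q hq d (fun i => ?_) (fun i => ?_) <;>
      · simp only [hd]; split_ifs <;> norm_num
  have hes : Summable (fun i : ℕ => e i / q ^ (i + 1)) := by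
    refine digit_summable q hq e (fun i => ?_) (fun i => ?_) <;>
      · simp only [he]; split_ifs <;> norm_num
  have key : yExp q j + zExp q j = ∑' i : ℕ, (d i + e i) / q ^ (i + 1) := by
    rw [yExp, zExp, ← Summable.tsum_add hds hes]
    congr 1; funext i; rw [add_div]
  rw [key]
  have hde : ∀ i, (d i + e i) / q ^ (i + 1) = q⁻¹ * q⁻¹ ^ i := by
    intro i
    have : d i + e i = 1 := by
      simp only [hd, he]; split_ifs <;> norm_num
    rw [this, pow_succ, inv_pow]; field_simp
  rw [tsum_congr hde, tsum_mul_left, tsum_geometric_of_lt_one (r := q⁻¹) (inv_nonneg.mpr hq0.le)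
    (by rw [inv_lt_one_iff₀]; right; exact hq)]
  field_simp

lemma iter_sum (q s : ℝ) (hs : q * s - 1 = s) : ∀ m : ℕ, ∀ a b : ℝ, a + b = s →
    (fun x : ℝ => q * x)^[m] a + (fun x : ℝ => q * x - 1)^[m] b = s := by
  intro m
  induction m with
  | zero => intro a b h; simpa using h
  | succ n ih =>
    intro a b h
    rw [Function.iterate_succ_apply, Function.iterate_succ_apply]
    exact ih (q * a) (q * b - 1) (by rw [← hs, ← h]; ring)

/-- T_0^m(T_1(y_j)) = z_k ↔ T_1^m(T_0(z_j)) = y_k. -/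
theorem iterate_eq_z_iff (q : ℝ) (hq : q ∈ Set.Ioo (1:ℝ) 2) (m j k : ℕ)
    (hj : 1 ≤ j) (hk : 1 ≤ k) :
    (fun x : ℝ => q * x)^[m] (q * yExp q j - 1) = zExp q k ↔
      (fun x : ℝ => q * x - 1)^[m] (q * zExp q j) = yExp q k := by
  obtain ⟨hq1, hq2⟩ := hq
  set s : ℝ := 1 / (q - 1) with hsdef
  have hq1' : q - 1 > 0 := by linarith
  have hs : q * s - 1 = s := by rw [hsdef]; field_simp [hq1'.ne']; ring
  have hj' : yExp q j + zExp q j = s := yz_sum q hq1 j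
  have hk' : yExp q k + zExp q k = s := yz_sum q hq1 k
  have key := iter_sum q s hs m (q * yExp q j - 1) (q * zExp q j) (by nlinarith)
  constructor <;> intro h <;> linarith
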